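/- Set R := −t + η₀ + η₁ + η₂. Then: (1) the characteristic polynomial of ad(R) equals the characteristic polynomial of −ad(t) = ad(−t); (2) ad(R) is a semisimple endomorphism of L if and only if η₀ = 0. (Lemma 7.3 (lemma:semisimpleR), parts (1) and (2), of the paper: for R = −θ∨ + η with η ∈ n₊ decomposed as η₀+η₁+η₂ in the highest-root gradation, σ(R) = σ(θ∨) and R is semisimple iff η₀ = 0.) -/

import Mathlib

/-- The eigenspace `{x ∈ L : ⁅t, x⁆ = c • x}` of `ad t`, as a submodule of the Lie algebra. -/
def adEigenspace (L : Type*) [LieRing L] [LieAlgebra ℂ L] (t : L) (c : ℂ) :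
    Submodule ℂ L where
  carrier := {x : L | ⁅t, x⁆ = c • x}
  add_mem' := by
    intro a b ha hb
    simp only [Set.mem_setOf_eq] at *
    rw [lie_add, ha, hb, smul_add]
  zero_mem' := by simp
  smul_mem' := by
    intro r x hx
    simp only [Set.mem_setOf_eq] at *
    rw [lie_smul, hx, smul_comm]

section MatrixAux

open Polynomial Matrix

lemma aux_charpoly_smul_one_add {n R : Type*} [Fintype n] [DecidableEq n] [CommRing R]
    (c : R) (M : Matrix n n R) : (c • 1 + M).charpoly = M.charpoly.comp (X - C c) := by
  let φ : R[X] →+* R[X] := eval₂RingHom Polynomial.C (X - C c)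
  have h : (charmatrix M).map φ = charmatrix (c • 1 + M) := by
    ext i j
    by_cases hij : i = j
    · subst hij
      simp [φ, charmatrix_apply, Matrix.one_apply, diagonal_apply, map_sub, map_add, sub_sub]
    · simp [φ, charmatrix_apply, Matrix.one_apply, hij, diagonal_apply]
  have h2 : (M.charmatrix.map ⇑φ).det = φ M.charmatrix.det := (RingHom.map_det φ _).symm
  rw [Matrix.charpoly, ← h, h2]
  rfl

lemma aux_charpoly_nilpotent {n : Type*} [Fintype n] [DecidableEq n]
    {M : Matrix n n ℂ} (h : IsNilpotent M) : M.charpoly = X ^ (Fintype.card n) := by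
  classical
  let b := Pi.basisFun ℂ n
  have h1 : (LinearMap.toMatrix b b (Matrix.toLin b b M)).charpoly
      = (Matrix.toLin b b M).charpoly := LinearMap.charpoly_toMatrix _ b
  rw [LinearMap.toMatrix_toLin] at h1
  obtain ⟨k, hk⟩ := h
  have h2 : IsNilpotent (Matrix.toLin b b M) := by
    refine ⟨k, ?_⟩
    have : (Matrix.toLinAlgEquiv b M) ^ k = 0 := by rw [← map_pow, hk, map_zero]
    exact this
  rw [h1, h2.charpoly_eq_X_pow_finrank]
  congr 1
  simp [Module.finrank_fintype_fun_eq_card]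

lemma aux_block_charpoly {n : Type*} [Fintype n] [DecidableEq n] (c : ℂ) {N : Matrix n n ℂ}
    (hN : IsNilpotent N) :
    (c • 1 + N).charpoly = (c • (1 : Matrix n n ℂ)).charpoly := by
  have h0 : (c • (1 : Matrix n n ℂ)) = c • 1 + (0 : Matrix n n ℂ) := (add_zero _).symm
  rw [aux_charpoly_smul_one_add, aux_charpoly_nilpotent hN, h0, aux_charpoly_smul_one_add,
    aux_charpoly_nilpotent (IsNilpotent.zero)]

lemma aux_toSquareBlock_mul {m α R : Type*} [Fintype m] [DecidableEq α] [CommRing R] {g : m → α}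
    {P Q : Matrix m m R} (hP : ∀ r s, g r ≠ g s → P r s = 0) (a : α) :
    (P * Q).toSquareBlock g a = P.toSquareBlock g a * Q.toSquareBlock g a := by
  classical
  ext r s
  simp only [toSquareBlock_def, Matrix.mul_apply, Matrix.of_apply]
  rw [← Finset.sum_subtype (Finset.univ.filter (fun x => g x = a))
    (fun x => by simp) (fun u => P (r : m) u * Q u (s : m))]
  refine (Finset.sum_subset (Finset.subset_univ _) ?_).symm
  intro u _ hu
  have : g (r : m) ≠ g u := by
    simp only [Finset.mem_filter, Finset.mem_univ, true_and] at hu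
    rw [r.2]; exact fun hh => hu hh.symm
  rw [hP _ _ this, zero_mul]

lemma aux_toSquareBlock_pow {m α R : Type*} [Fintype m] [DecidableEq m] [DecidableEq α]
    [CommRing R] {g : m → α}
    {P : Matrix m m R} (hP : ∀ r s, g r ≠ g s → P r s = 0) (a : α) (k : ℕ) :
    (P ^ k).toSquareBlock g a = (P.toSquareBlock g a) ^ k := by
  induction k with
  | zero =>
    ext r s
    simp only [pow_zero, toSquareBlock_def, Matrix.of_apply, Matrix.one_apply, Subtype.ext_iff]
  | succ k ih => rw [pow_succ', pow_succ', aux_toSquareBlock_mul hP, ih]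

lemma aux_toSquareBlock_nilpotent {m α R : Type*} [Fintype m] [DecidableEq m] [DecidableEq α]
    [CommRing R] {g : m → α}
    {P : Matrix m m R} (hP : ∀ r s, g r ≠ g s → P r s = 0) (a : α) (h : IsNilpotent P) :
    IsNilpotent (P.toSquareBlock g a) := by
  obtain ⟨k, hk⟩ := h
  refine ⟨k, ?_⟩
  rw [← aux_toSquareBlock_pow hP, hk]
  ext r s
  simp [toSquareBlock_def]

end MatrixAux


set_option linter.unusedSectionVars false

namespace SemisimpleAux

variable {L : Type*} [LieRing L] [LieAlgebra ℂ L] [Module.Finite ℂ L] {t : L}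

lemma mem_adE {c : ℂ} {x : L} : x ∈ adEigenspace L t c ↔ ⁅t, x⁆ = c • x := Iff.rfl

lemma adE_eq_eigenspace (t : L) (c : ℂ) :
    adEigenspace L t c = Module.End.eigenspace (LieAlgebra.ad ℂ L t) c := by
  ext x
  rw [Module.End.mem_eigenspace_iff, mem_adE, LieAlgebra.ad_apply]

lemma lie_mem_adE {c d : ℂ} {x y : L} (hx : x ∈ adEigenspace L t c)
    (hy : y ∈ adEigenspace L t d) : ⁅x, y⁆ ∈ adEigenspace L t (c + d) := by
  rw [mem_adE] at hx hy ⊢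
  rw [leibniz_lie t x y, hx, hy, smul_lie, lie_smul, add_smul]

variable (hdec : DirectSum.IsInternal
  (fun i : Set.Icc (-2 : ℤ) 2 => adEigenspace L t ((i : ℤ) : ℂ)))

include hdec

lemma adE_disjoint (c : ℂ) (P : Set.Icc (-2 : ℤ) 2 → Prop) (h : ∀ i, P i → ((i : ℤ) : ℂ) ≠ c) :
    Disjoint (adEigenspace L t c)
      (⨆ i : {i : Set.Icc (-2 : ℤ) 2 // P i}, adEigenspace L t ((i.1 : ℤ) : ℂ)) := by
  have hind := (Module.End.independent_genEigenspace (LieAlgebra.ad ℂ L t) 1) c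
  refine Disjoint.mono ?_ ?_ hind
  · exact le_of_eq (adE_eq_eigenspace t c)
  · refine iSup_le fun i => ?_
    rw [adE_eq_eigenspace]
    exact le_iSup₂_of_le ((i.1 : ℤ) : ℂ) (h i.1 i.2) le_rfl

lemma adE_bot (c : ℂ) (hc : ∀ i : Set.Icc (-2 : ℤ) 2, ((i : ℤ) : ℂ) ≠ c) :
    adEigenspace L t c = ⊥ := by
  have hd := adE_disjoint hdec c (fun _ => True) (fun i _ => hc i)
  have htop : (⨆ i : Set.Icc (-2 : ℤ) 2, adEigenspace L t ((i : ℤ) : ℂ)) = ⊤ :=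
    hdec.submodule_iSup_eq_top
  have hle : (⊤ : Submodule ℂ L) ≤
      ⨆ i : {i : Set.Icc (-2 : ℤ) 2 // True}, adEigenspace L t ((i.1 : ℤ) : ℂ) := by
    rw [← htop]
    exact iSup_le fun i =>
      le_iSup (fun j : {i : Set.Icc (-2 : ℤ) 2 // True} =>
        adEigenspace L t ((j.1 : ℤ) : ℂ)) ⟨i, trivial⟩
  exact disjoint_top.mp (hd.mono_right hle)

lemma adE_bot_int (d : ℤ) (hd : d ∉ Set.Icc (-2 : ℤ) 2) : adEigenspace L t ((d : ℤ) : ℂ) = ⊥ := by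
  refine adE_bot hdec _ (fun i hi => ?_)
  have : (i : ℤ) = d := by exact_mod_cast hi
  exact hd (this ▸ i.2)



open Polynomial

omit hdec in
lemma adR_apply_eq (η₀ η₁ η₂ : L) {d : ℂ} {x : L} (hx : x ∈ adEigenspace L t d) :
    LieAlgebra.ad ℂ L (-t + η₀ + η₁ + η₂) x
      = (-d) • x + ⁅η₀, x⁆ + ⁅η₁, x⁆ + ⁅η₂, x⁆ := by
  rw [LieAlgebra.ad_apply, add_lie, add_lie, add_lie, neg_lie, mem_adE.mp hx, neg_smul]

lemma ss_of_eta0_zero (η₁ η₂ : L) (hη₁ : η₁ ∈ adEigenspace L t 1)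
    (hη₂ : η₂ ∈ adEigenspace L t 2) :
    (LieAlgebra.ad ℂ L (-t + 0 + η₁ + η₂)).IsSemisimple := by
  classical
  set A := LieAlgebra.ad ℂ L (-t + 0 + η₁ + η₂) with hA
  let pc : ℤ → ℂ[X] := fun c => ∏ j ∈ Finset.Icc c 2, (X + C ((j : ℤ) : ℂ))
  have hmem1 : ∀ {c : ℤ} {x : L}, x ∈ adEigenspace L t ((c : ℤ) : ℂ) →
      ⁅η₁, x⁆ ∈ adEigenspace L t (((c + 1 : ℤ) : ℤ) : ℂ) := by
    intro c x hx
    have := lie_mem_adE hη₁ hx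
    have hc : ((1 : ℂ) + ((c : ℤ) : ℂ)) = (((c + 1 : ℤ) : ℤ) : ℂ) := by push_cast; ring
    rwa [hc] at this
  have hmem2 : ∀ {c : ℤ} {x : L}, x ∈ adEigenspace L t ((c : ℤ) : ℂ) →
      ⁅η₂, x⁆ ∈ adEigenspace L t (((c + 2 : ℤ) : ℤ) : ℂ) := by
    intro c x hx
    have := lie_mem_adE hη₂ hx
    have hc : ((2 : ℂ) + ((c : ℤ) : ℂ)) = (((c + 2 : ℤ) : ℤ) : ℂ) := by push_cast; ring
    rwa [hc] at this
  have hbot : ∀ {d : ℤ} {x : L}, 2 < d → x ∈ adEigenspace L t ((d : ℤ) : ℂ) → x = 0 := by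
    intro d x hd hx
    rw [adE_bot_int hdec d (by simp [Set.mem_Icc]; omega)] at hx
    simpa using hx
  have hstep : ∀ {c : ℤ} {x : L}, x ∈ adEigenspace L t ((c : ℤ) : ℂ) →
      (Polynomial.aeval A) (X + C ((c : ℤ) : ℂ)) x = ⁅η₁, x⁆ + ⁅η₂, x⁆ := by
    intro c x hx
    rw [map_add, aeval_X, aeval_C, LinearMap.add_apply, Module.algebraMap_end_apply,
      hA, adR_apply_eq 0 η₁ η₂ hx, zero_lie, neg_smul]
    abel
  have hsplit' : ∀ c : ℤ, c ≤ 2 → pc c = (X + C ((c : ℤ) : ℂ)) * pc (c + 1) := by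
    intro c hc
    have h1 : Finset.Icc c 2 = insert c (Finset.Icc (c + 1) 2) := by
      ext j; simp only [Finset.mem_Icc, Finset.mem_insert]; omega
    have h2 : c ∉ Finset.Icc (c + 1) 2 := by simp only [Finset.mem_Icc]; omega
    rw [show pc c = ∏ j ∈ Finset.Icc c 2, (X + C ((j : ℤ) : ℂ)) from rfl, h1,
      Finset.prod_insert h2]
  have hsplit : ∀ c : ℤ, c ≤ 2 → pc c = pc (c + 1) * (X + C ((c : ℤ) : ℂ)) := by
    intro c hc
    rw [hsplit' c hc, mul_comm]
  have key : ∀ n : ℕ, ∀ c : ℤ, 2 ≤ c + n → ∀ x ∈ adEigenspace L t ((c : ℤ) : ℂ),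
      (Polynomial.aeval A) (pc c) x = 0 := by
    intro n
    induction n with
    | zero =>
      intro c hc x hx
      rcases lt_or_eq_of_le (show (2 : ℤ) ≤ c by omega) with h2 | h2
      · rw [hbot h2 hx, map_zero]
      · subst h2
        have hpc : pc 2 = X + C ((2 : ℤ) : ℂ) := by
          show ∏ j ∈ Finset.Icc (2:ℤ) 2, (X + C ((j : ℤ) : ℂ)) = _
          rw [Finset.Icc_self, Finset.prod_singleton]
        rw [hpc, hstep hx, hbot (by omega) (hmem1 hx), hbot (by omega) (hmem2 hx)]
        simp
    | succ n ih =>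
      intro c hc x hx
      by_cases h2 : 2 < c
      · rw [hbot h2 hx, map_zero]
      push_neg at h2
      rw [hsplit c h2, map_mul, Module.End.mul_apply, hstep hx, map_add,
        ih (c + 1) (by omega) _ (hmem1 hx), zero_add]
      by_cases h1 : c + 1 ≤ 2
      · have e : pc (c + 1) = (X + C (((c + 1 : ℤ) : ℤ) : ℂ)) * pc (c + 2) := by
          rw [hsplit' (c + 1) h1, show c + 1 + 1 = c + 2 by ring]
        rw [e, map_mul, Module.End.mul_apply, ih (c + 2) (by omega) _ (hmem2 hx), map_zero]
      · rw [hbot (by omega) (hmem2 hx), map_zero]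
  have hann : Polynomial.aeval A (pc (-2)) = 0 := by
    ext x
    have hx : x ∈ ⨆ i : Set.Icc (-2 : ℤ) 2, adEigenspace L t ((i : ℤ) : ℂ) :=
      hdec.submodule_iSup_eq_top ▸ Submodule.mem_top
    rw [LinearMap.zero_apply]
    refine Submodule.iSup_induction _ (motive := fun y => (Polynomial.aeval A) (pc (-2)) y = 0)
      hx ?_ (map_zero _) (fun y z hy hz => by
        have hy' : (Polynomial.aeval A) (pc (-2)) y = 0 := hy
        have hz' : (Polynomial.aeval A) (pc (-2)) z = 0 := hz
        show (Polynomial.aeval A) (pc (-2)) (y + z) = 0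
        rw [map_add, hy', hz', add_zero])
    · intro i y hy
      obtain ⟨hi1, hi2⟩ := Set.mem_Icc.mp i.2
      have hU : Finset.Icc (-2 : ℤ) 2 = Finset.Icc (-2) ((i : ℤ) - 1) ∪ Finset.Icc (i : ℤ) 2 := by
        ext j; simp only [Finset.mem_Icc, Finset.mem_union]; omega
      have hD : Disjoint (Finset.Icc (-2 : ℤ) ((i : ℤ) - 1)) (Finset.Icc (i : ℤ) 2) := by
        rw [Finset.disjoint_left]; intro a ha hb
        simp only [Finset.mem_Icc] at ha hb; omega
      have hp : pc (-2) = (∏ j ∈ Finset.Icc (-2 : ℤ) ((i : ℤ) - 1), (X + C ((j : ℤ) : ℂ)))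
          * pc (i : ℤ) := by
        show ∏ j ∈ Finset.Icc (-2:ℤ) 2, (X + C ((j : ℤ) : ℂ)) = _
        rw [hU, Finset.prod_union hD]
      rw [hp, map_mul, Module.End.mul_apply, key 8 (i : ℤ) (by omega) _ hy, map_zero]
  have hsf : Squarefree (pc (-2)) := by
    have hform : pc (-2) = ∏ j ∈ Finset.Icc (-2 : ℤ) 2, (X - C (-((j : ℤ) : ℂ))) := by
      refine Finset.prod_congr rfl fun j _ => ?_
      rw [map_neg, sub_neg_eq_add]
    rw [hform]
    refine Polynomial.Separable.squarefree ?_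
    rw [Polynomial.separable_prod_X_sub_C_iff']
    intro a _ b _ hab
    have : ((a : ℤ) : ℂ) = ((b : ℤ) : ℂ) := by
      have := neg_injective hab; exact this
    exact_mod_cast this
  exact Module.End.isSemisimple_of_squarefree_aeval_eq_zero hsf hann

lemma eta0_eq_zero_of_ss (hcenter : LieAlgebra.center ℂ L = ⊥)
    (η₀ η₁ η₂ : L) (hη₀ : η₀ ∈ adEigenspace L t 0)
    (hη₀nil : IsNilpotent (LieAlgebra.ad ℂ L η₀))
    (hη₁ : η₁ ∈ adEigenspace L t 1) (hη₂ : η₂ ∈ adEigenspace L t 2)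
    (hss : (LieAlgebra.ad ℂ L (-t + η₀ + η₁ + η₂)).IsSemisimple) : η₀ = 0 := by
  classical
  set A := LieAlgebra.ad ℂ L (-t + η₀ + η₁ + η₂) with hA
  set Δ := LieAlgebra.ad ℂ L (-t + η₀) with hΔ
  have hmem0 : ∀ {c : ℤ} {x : L}, x ∈ adEigenspace L t ((c : ℤ) : ℂ) →
      ⁅η₀, x⁆ ∈ adEigenspace L t ((c : ℤ) : ℂ) := by
    intro c x hx
    have := lie_mem_adE hη₀ hx
    rwa [zero_add] at this
  have hmem1 : ∀ {c : ℤ} {x : L}, x ∈ adEigenspace L t ((c : ℤ) : ℂ) →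
      ⁅η₁, x⁆ ∈ adEigenspace L t (((c + 1 : ℤ) : ℤ) : ℂ) := by
    intro c x hx
    have := lie_mem_adE hη₁ hx
    have hc : ((1 : ℂ) + ((c : ℤ) : ℂ)) = (((c + 1 : ℤ) : ℤ) : ℂ) := by push_cast; ring
    rwa [hc] at this
  have hmem2 : ∀ {c : ℤ} {x : L}, x ∈ adEigenspace L t ((c : ℤ) : ℂ) →
      ⁅η₂, x⁆ ∈ adEigenspace L t (((c + 2 : ℤ) : ℤ) : ℂ) := by
    intro c x hx
    have := lie_mem_adE hη₂ hx
    have hc : ((2 : ℂ) + ((c : ℤ) : ℂ)) = (((c + 2 : ℤ) : ℤ) : ℂ) := by push_cast; ring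
    rwa [hc] at this
  set G : ℤ → Submodule ℂ L := fun c =>
    ⨆ i : {i : Set.Icc (-2 : ℤ) 2 // c < (i : ℤ)}, adEigenspace L t ((i.1 : ℤ) : ℂ) with hG
  have hEleG : ∀ {c d : ℤ}, c < d → adEigenspace L t ((d : ℤ) : ℂ) ≤ G c := by
    intro c d hcd
    by_cases hd : d ∈ Set.Icc (-2 : ℤ) 2
    · exact le_iSup (fun i : {i : Set.Icc (-2 : ℤ) 2 // c < (i : ℤ)} =>
        adEigenspace L t ((i.1 : ℤ) : ℂ)) ⟨⟨d, hd⟩, hcd⟩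
    · rw [adE_bot_int hdec d hd]; exact bot_le
  have hAx : ∀ {c : ℤ} {x : L}, x ∈ adEigenspace L t ((c : ℤ) : ℂ) →
      A x = (-((c : ℤ) : ℂ)) • x + ⁅η₀, x⁆ + ⁅η₁, x⁆ + ⁅η₂, x⁆ := by
    intro c x hx
    rw [hA, adR_apply_eq η₀ η₁ η₂ hx]
  have hΔx : ∀ {c : ℤ} {x : L}, x ∈ adEigenspace L t ((c : ℤ) : ℂ) →
      Δ x = (-((c : ℤ) : ℂ)) • x + ⁅η₀, x⁆ := by
    intro c x hx
    rw [hΔ, LieAlgebra.ad_apply, add_lie, neg_lie, mem_adE.mp hx, neg_smul]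
  have hGA : ∀ c : ℤ, ∀ y ∈ G c, A y ∈ G c := by
    intro c y hy
    refine Submodule.iSup_induction _ (motive := fun z => A z ∈ G c) hy (fun i x hx => ?_)
      (by show A 0 ∈ G c; rw [map_zero]; exact zero_mem _)
      (fun u w hu hw => by
        have hu' : A u ∈ G c := hu
        have hw' : A w ∈ G c := hw
        show A (u + w) ∈ G c
        rw [map_add]; exact add_mem hu' hw')
    show A x ∈ G c
    rw [hAx hx]
    exact add_mem (add_mem (add_mem (Submodule.smul_mem _ _ (hEleG i.2 hx))
      (hEleG i.2 (hmem0 hx))) (hEleG (by have := i.2; omega) (hmem1 hx)))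
      (hEleG (by have := i.2; omega) (hmem2 hx))
  have hΔE : ∀ {c : ℤ} {x : L}, x ∈ adEigenspace L t ((c : ℤ) : ℂ) →
      Δ x ∈ adEigenspace L t ((c : ℤ) : ℂ) := by
    intro c x hx
    rw [hΔx hx]
    exact add_mem (Submodule.smul_mem _ _ hx) (hmem0 hx)
  have hΔpow : ∀ {c : ℤ} {x : L}, x ∈ adEigenspace L t ((c : ℤ) : ℂ) → ∀ n : ℕ,
      (Δ ^ n) x ∈ adEigenspace L t ((c : ℤ) : ℂ) := by
    intro c x hx n
    induction n with
    | zero => simpa using hx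
    | succ n ih =>
      rw [pow_succ', Module.End.mul_apply]
      exact hΔE ih
  have hdiff : ∀ {c : ℤ} {x : L}, x ∈ adEigenspace L t ((c : ℤ) : ℂ) → ∀ n : ℕ,
      (A ^ n) x - (Δ ^ n) x ∈ G c := by
    intro c x hx n
    induction n with
    | zero => simpa using zero_mem (G c)
    | succ n ih =>
      have hy := hΔpow hx n
      have hsub : (A ^ (n + 1)) x - (Δ ^ (n + 1)) x
          = A ((A ^ n) x - (Δ ^ n) x) + (A ((Δ ^ n) x) - Δ ((Δ ^ n) x)) := by
        rw [pow_succ' A n, pow_succ' Δ n, Module.End.mul_apply, Module.End.mul_apply, map_sub]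
        abel
      rw [hsub]
      refine add_mem (hGA c _ ih) ?_
      have h2 : A ((Δ ^ n) x) - Δ ((Δ ^ n) x) = ⁅η₁, (Δ ^ n) x⁆ + ⁅η₂, (Δ ^ n) x⁆ := by
        rw [hAx hy, hΔx hy]
        abel
      rw [h2]
      exact add_mem (hEleG (by omega) (hmem1 hy)) (hEleG (by omega) (hmem2 hy))
  have haeval_diff : ∀ {c : ℤ} {x : L}, x ∈ adEigenspace L t ((c : ℤ) : ℂ) → ∀ r : ℂ[X],
      (Polynomial.aeval A) r x - (Polynomial.aeval Δ) r x ∈ G c := by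
    intro c x hx r
    rw [Polynomial.aeval_eq_sum_range (x := A), Polynomial.aeval_eq_sum_range (x := Δ),
      LinearMap.sum_apply, LinearMap.sum_apply, ← Finset.sum_sub_distrib]
    refine Submodule.sum_mem _ fun i _ => ?_
    rw [LinearMap.smul_apply, LinearMap.smul_apply, ← smul_sub]
    exact Submodule.smul_mem _ _ (hdiff hx i)
  have haevalΔ_mem : ∀ {c : ℤ} {x : L}, x ∈ adEigenspace L t ((c : ℤ) : ℂ) → ∀ r : ℂ[X],
      (Polynomial.aeval Δ) r x ∈ adEigenspace L t ((c : ℤ) : ℂ) := by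
    intro c x hx r
    rw [Polynomial.aeval_eq_sum_range (x := Δ), LinearMap.sum_apply]
    exact Submodule.sum_mem _ fun i _ => by
      rw [LinearMap.smul_apply]
      exact Submodule.smul_mem _ _ (hΔpow hx i)
  set q := minpoly ℂ A with hq
  have hAq : Polynomial.aeval A q = 0 := minpoly.aeval ℂ A
  have hΔq0 : ∀ (i : Set.Icc (-2 : ℤ) 2) (x : L), x ∈ adEigenspace L t ((i : ℤ) : ℂ) →
      (Polynomial.aeval Δ) q x = 0 := by
    intro i x hx
    have h1 : (Polynomial.aeval Δ) q x ∈ adEigenspace L t ((i : ℤ) : ℂ) := haevalΔ_mem hx q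
    have h2 : (Polynomial.aeval Δ) q x ∈ G (i : ℤ) := by
      have hd := haeval_diff hx q
      rw [hAq] at hd
      simp only [LinearMap.zero_apply, zero_sub] at hd
      simpa using neg_mem hd
    have hdisj := adE_disjoint hdec ((i : ℤ) : ℂ) (fun j => (i : ℤ) < (j : ℤ))
      (fun j hj heq => by
        have : (j : ℤ) = (i : ℤ) := by exact_mod_cast heq
        omega)
    exact Submodule.disjoint_def.mp hdisj _ h1 h2
  have hΔq : Polynomial.aeval Δ q = 0 := by
    ext x
    have hx : x ∈ ⨆ i : Set.Icc (-2 : ℤ) 2, adEigenspace L t ((i : ℤ) : ℂ) :=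
      hdec.submodule_iSup_eq_top ▸ Submodule.mem_top
    rw [LinearMap.zero_apply]
    refine Submodule.iSup_induction _ (motive := fun y => (Polynomial.aeval Δ) q y = 0)
      hx (fun i y hy => hΔq0 i y hy) (map_zero _)
      (fun y z hy hz => by
        have hy' : (Polynomial.aeval Δ) q y = 0 := hy
        have hz' : (Polynomial.aeval Δ) q z = 0 := hz
        show (Polynomial.aeval Δ) q (y + z) = 0
        rw [map_add, hy', hz', add_zero])
  have hΔss : Δ.IsSemisimple :=
    Module.End.isSemisimple_of_squarefree_aeval_eq_zero hss.minpoly_squarefree hΔq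
  -- ad t is semisimple
  have hTann : Polynomial.aeval (LieAlgebra.ad ℂ L t)
      (∏ j ∈ Finset.Icc (-2 : ℤ) 2, (X - C ((j : ℤ) : ℂ))) = 0 := by
    ext x
    have hx : x ∈ ⨆ i : Set.Icc (-2 : ℤ) 2, adEigenspace L t ((i : ℤ) : ℂ) :=
      hdec.submodule_iSup_eq_top ▸ Submodule.mem_top
    rw [LinearMap.zero_apply]
    set p' := ∏ j ∈ Finset.Icc (-2 : ℤ) 2, (X - C ((j : ℤ) : ℂ)) with hp'
    refine Submodule.iSup_induction _ (motive := fun y => (Polynomial.aeval (LieAlgebra.ad ℂ L t)) p' y = 0)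
      hx (fun i y hy => ?_) (map_zero _)
      (fun y z hy hz => by
        have hy' : (Polynomial.aeval (LieAlgebra.ad ℂ L t)) p' y = 0 := hy
        have hz' : (Polynomial.aeval (LieAlgebra.ad ℂ L t)) p' z = 0 := hz
        show (Polynomial.aeval (LieAlgebra.ad ℂ L t)) p' (y + z) = 0
        rw [map_add, hy', hz', add_zero])
    have hi : (i : ℤ) ∈ Finset.Icc (-2 : ℤ) 2 := by
      obtain ⟨h1, h2⟩ := Set.mem_Icc.mp i.2
      simp only [Finset.mem_Icc]; omega
    have hsp : p' = (∏ j ∈ (Finset.Icc (-2 : ℤ) 2).erase (i : ℤ), (X - C ((j : ℤ) : ℂ)))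
        * (X - C (((i : ℤ) : ℤ) : ℂ)) := (Finset.prod_erase_mul _ _ hi).symm
    show (Polynomial.aeval (LieAlgebra.ad ℂ L t)) p' y = 0
    rw [hsp, map_mul, Module.End.mul_apply]
    have hinner : (Polynomial.aeval (LieAlgebra.ad ℂ L t)) (X - C (((i : ℤ) : ℤ) : ℂ)) y = 0 := by
      rw [map_sub, aeval_X, aeval_C, LinearMap.sub_apply, Module.algebraMap_end_apply,
        LieAlgebra.ad_apply, mem_adE.mp hy, sub_self]
    rw [hinner, map_zero]
  have hTsf : Squarefree (∏ j ∈ Finset.Icc (-2 : ℤ) 2, (X - C ((j : ℤ) : ℂ))) := by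
    refine Polynomial.Separable.squarefree ?_
    rw [Polynomial.separable_prod_X_sub_C_iff']
    intro a _ b _ hab
    exact_mod_cast hab
  have hTss : (LieAlgebra.ad ℂ L t).IsSemisimple :=
    Module.End.isSemisimple_of_squarefree_aeval_eq_zero hTsf hTann
  have hcomm : Commute Δ (LieAlgebra.ad ℂ L t) := by
    have h00 : ⁅η₀, t⁆ = 0 := by
      have h01 := mem_adE.mp hη₀
      rw [zero_smul] at h01
      rw [← lie_skew, h01, neg_zero]
    have h0 : ⁅(-t + η₀ : L), t⁆ = 0 := by
      rw [add_lie, neg_lie, lie_self, neg_zero, zero_add, h00]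
    refine LinearMap.ext fun x => ?_
    show Δ (LieAlgebra.ad ℂ L t x) = LieAlgebra.ad ℂ L t (Δ x)
    rw [hΔ, LieAlgebra.ad_apply, LieAlgebra.ad_apply, LieAlgebra.ad_apply, LieAlgebra.ad_apply,
      leibniz_lie (-t + η₀) t x, h0, zero_lie, zero_add]
  have hadd : LieAlgebra.ad ℂ L η₀ = Δ + LieAlgebra.ad ℂ L t := by
    ext x
    rw [hΔ]
    simp only [LinearMap.add_apply, LieAlgebra.ad_apply, add_lie, neg_lie]
    abel
  have hη₀ss : (LieAlgebra.ad ℂ L η₀).IsSemisimple := by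
    rw [hadd]
    exact hΔss.add_of_commute hcomm hTss
  have h0 : LieAlgebra.ad ℂ L η₀ = 0 :=
    Module.End.eq_zero_of_isNilpotent_isSemisimple hη₀nil hη₀ss
  have hc : η₀ ∈ LieAlgebra.center ℂ L := by
    refine (LieModule.mem_maxTrivSubmodule ℂ L L η₀).mpr fun x => ?_
    rw [← lie_skew, show ⁅η₀, x⁆ = (LieAlgebra.ad ℂ L η₀) x from rfl, h0]
    simp
  rw [hcenter] at hc
  exact (LieSubmodule.mem_bot _).mp hc


set_option maxHeartbeats 2000000 in
lemma charpoly_eq (η₀ η₁ η₂ : L) (hη₀ : η₀ ∈ adEigenspace L t 0)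
    (hη₀nil : IsNilpotent (LieAlgebra.ad ℂ L η₀))
    (hη₁ : η₁ ∈ adEigenspace L t 1) (hη₂ : η₂ ∈ adEigenspace L t 2) :
    (LieAlgebra.ad ℂ L (-t + η₀ + η₁ + η₂)).charpoly
      = (LieAlgebra.ad ℂ L (-t)).charpoly := by
  classical
  set A := LieAlgebra.ad ℂ L (-t + η₀ + η₁ + η₂) with hA
  set T := LieAlgebra.ad ℂ L (-t) with hT
  let v : ∀ i : Set.Icc (-2 : ℤ) 2,
      Module.Basis (Module.Free.ChooseBasisIndex ℂ (adEigenspace L t ((i : ℤ) : ℂ))) ℂ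
        (adEigenspace L t ((i : ℤ) : ℂ)) :=
    fun i => Module.Free.chooseBasis ℂ _
  set B := hdec.collectedBasis v with hB
  set g : (Σ i : Set.Icc (-2 : ℤ) 2,
      Module.Free.ChooseBasisIndex ℂ (adEigenspace L t ((i : ℤ) : ℂ))) → ℤ :=
    fun r => -(r.1 : ℤ) with hg
  have hrepr0 : ∀ {d : ℤ} {y : L}, y ∈ adEigenspace L t ((d : ℤ) : ℂ) →
      ∀ {r : Σ i : Set.Icc (-2 : ℤ) 2,
        Module.Free.ChooseBasisIndex ℂ (adEigenspace L t ((i : ℤ) : ℂ))},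
      ((r.1 : ℤ)) ≠ d → B.repr y r = 0 := by
    intro d y hy r hr
    by_cases hmem : d ∈ Set.Icc (-2 : ℤ) 2
    · exact hdec.collectedBasis_repr_of_mem_ne v
        (i := ⟨d, hmem⟩) (fun h => hr (show ((r.1 : ℤ)) = d by rw [← h])) hy
    · rw [adE_bot_int hdec d hmem] at hy
      rw [(Submodule.mem_bot ℂ).mp hy]
      simp
  have hBmem : ∀ s : Σ i : Set.Icc (-2 : ℤ) 2,
      Module.Free.ChooseBasisIndex ℂ (adEigenspace L t ((i : ℤ) : ℂ)),
      (B s) ∈ adEigenspace L t ((s.1 : ℤ) : ℂ) := fun s => hdec.collectedBasis_mem v s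
  have hmem0 : ∀ {c : ℤ} {x : L}, x ∈ adEigenspace L t ((c : ℤ) : ℂ) →
      ⁅η₀, x⁆ ∈ adEigenspace L t ((c : ℤ) : ℂ) := by
    intro c x hx
    have := lie_mem_adE hη₀ hx
    rwa [zero_add] at this
  have hmem1 : ∀ {c : ℤ} {x : L}, x ∈ adEigenspace L t ((c : ℤ) : ℂ) →
      ⁅η₁, x⁆ ∈ adEigenspace L t (((c + 1 : ℤ) : ℤ) : ℂ) := by
    intro c x hx
    have := lie_mem_adE hη₁ hx
    have hc : ((1 : ℂ) + ((c : ℤ) : ℂ)) = (((c + 1 : ℤ) : ℤ) : ℂ) := by push_cast; ring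
    rwa [hc] at this
  have hmem2 : ∀ {c : ℤ} {x : L}, x ∈ adEigenspace L t ((c : ℤ) : ℂ) →
      ⁅η₂, x⁆ ∈ adEigenspace L t (((c + 2 : ℤ) : ℤ) : ℂ) := by
    intro c x hx
    have := lie_mem_adE hη₂ hx
    have hc : ((2 : ℂ) + ((c : ℤ) : ℂ)) = (((c + 2 : ℤ) : ℤ) : ℂ) := by push_cast; ring
    rwa [hc] at this
  have hTx : ∀ {d : ℤ} {x : L}, x ∈ adEigenspace L t ((d : ℤ) : ℂ) →
      T x = (-((d : ℤ) : ℂ)) • x := by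
    intro d x hx
    rw [hT, LieAlgebra.ad_apply, neg_lie, mem_adE.mp hx, neg_smul]
  rw [← LinearMap.charpoly_toMatrix A B, ← LinearMap.charpoly_toMatrix T B]
  set MA := LinearMap.toMatrix B B A with hMA
  set MT := LinearMap.toMatrix B B T with hMT
  set M0 := LinearMap.toMatrix B B (LieAlgebra.ad ℂ L η₀) with hM0
  have htriA : MA.BlockTriangular g := by
    intro r s hlt
    have hrs : (r.1 : ℤ) < (s.1 : ℤ) := by
      simp only [hg, neg_lt_neg_iff] at hlt
      exact hlt
    rw [hMA, LinearMap.toMatrix_apply, hA, adR_apply_eq η₀ η₁ η₂ (hBmem s), map_add, map_add,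
      map_add, Finsupp.add_apply, Finsupp.add_apply, Finsupp.add_apply,
      hrepr0 (Submodule.smul_mem _ _ (hBmem s)) (by omega),
      hrepr0 (hmem0 (hBmem s)) (by omega),
      hrepr0 (hmem1 (hBmem s)) (by omega),
      hrepr0 (hmem2 (hBmem s)) (by omega)]
    simp
  have htriT : MT.BlockTriangular g := by
    intro r s hlt
    have hrs : (r.1 : ℤ) < (s.1 : ℤ) := by
      simp only [hg, neg_lt_neg_iff] at hlt
      exact hlt
    rw [hMT, LinearMap.toMatrix_apply, hTx (hBmem s)]
    exact hrepr0 (Submodule.smul_mem _ _ (hBmem s)) (by omega)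
  rw [htriA.charpoly, htriT.charpoly]
  refine Finset.prod_congr rfl fun a ha => ?_
  have hfst : ∀ r s : {x : Σ i : Set.Icc (-2 : ℤ) 2,
      Module.Free.ChooseBasisIndex ℂ (adEigenspace L t ((i : ℤ) : ℂ)) // g x = a},
      (r.1.1 : ℤ) = (s.1.1 : ℤ) := by
    intro r s
    have h1 : -(r.1.1 : ℤ) = a := r.2
    have h2 : -(s.1.1 : ℤ) = a := s.2
    omega
  have hscalar : ∀ s : {x : Σ i : Set.Icc (-2 : ℤ) 2,
      Module.Free.ChooseBasisIndex ℂ (adEigenspace L t ((i : ℤ) : ℂ)) // g x = a},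
      (-(((s.1.1 : ℤ)) : ℂ)) = ((a : ℤ) : ℂ) := by
    intro s
    have h2 : -(s.1.1 : ℤ) = a := s.2
    exact_mod_cast congrArg (fun z : ℤ => (z : ℂ)) h2
  have hMTblock : MT.toSquareBlock g a = ((a : ℤ) : ℂ) • 1 := by
    ext r s
    show MT r.1 s.1 = (((a : ℤ) : ℂ) • (1 : Matrix _ _ ℂ)) r s
    rw [hMT, LinearMap.toMatrix_apply, hTx (hBmem s.1), map_smul, Finsupp.smul_apply,
      Module.Basis.repr_self, Finsupp.single_apply, Matrix.smul_apply, Matrix.one_apply, hscalar s]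
    by_cases h : r = s
    · subst h
      simp
    · have h' : ¬ (s.1 = r.1) := fun hh => h (Subtype.ext hh.symm)
      have h'' : ¬ (r = s) := h
      simp [h', h'']
  have hMAblock : MA.toSquareBlock g a = ((a : ℤ) : ℂ) • 1 + M0.toSquareBlock g a := by
    ext r s
    have hL : MA.toSquareBlock g a r s = MA r.1 s.1 := rfl
    rw [hL, Matrix.add_apply, Matrix.smul_apply, Matrix.one_apply]
    have hMblk : M0.toSquareBlock g a r s = M0 r.1 s.1 := rfl
    rw [hMblk, hMA, hM0, LinearMap.toMatrix_apply, LinearMap.toMatrix_apply,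
      hA, adR_apply_eq η₀ η₁ η₂ (hBmem s.1), map_add, map_add, map_add,
      Finsupp.add_apply, Finsupp.add_apply, Finsupp.add_apply,
      hrepr0 (hmem1 (hBmem s.1)) (by have := hfst r s; omega),
      hrepr0 (hmem2 (hBmem s.1)) (by have := hfst r s; omega),
      map_smul, Finsupp.smul_apply, Module.Basis.repr_self, Finsupp.single_apply, hscalar s]
    rw [LieAlgebra.ad_apply]
    by_cases h : r = s
    · subst h
      simp
    · have h' : ¬ (s.1 = r.1) := fun hh => h (Subtype.ext hh.symm)
      have h'' : ¬ (r = s) := h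
      simp [h', h'']
  have hM0diag : ∀ r s, g r ≠ g s → M0 r s = 0 := by
    intro r s hgrs
    have hne : (r.1 : ℤ) ≠ (s.1 : ℤ) := by
      intro h
      exact hgrs (by simp only [hg, h])
    rw [hM0, LinearMap.toMatrix_apply, LieAlgebra.ad_apply]
    exact hrepr0 (hmem0 (hBmem s)) hne
  have hM0nil : IsNilpotent M0 := by
    have h : M0 = (LinearMap.toMatrixAlgEquiv B) (LieAlgebra.ad ℂ L η₀) := rfl
    rw [h]
    exact hη₀nil.map _
  rw [hMAblock, hMTblock]
  exact aux_block_charpoly _ (aux_toSquareBlock_nilpotent hM0diag a hM0nil)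

end SemisimpleAux

/-- Lemma 7.3 (lemma:semisimpleR), parts (1) and (2), of the paper: let `L` be a
finite-dimensional complex Lie algebra with trivial center, `t ∈ L` such that `L` is the
internal direct sum of the eigenspaces `L_i = {x : ⁅t,x⁆ = i•x}`, `i ∈ {−2,…,2}`, of `ad t`.
Let `η₀ ∈ L₀` with `ad η₀` nilpotent, `η₁ ∈ L₁`, `η₂ ∈ L₂`, and set
`R = −t + η₀ + η₁ + η₂`.  Then the characteristic polynomial of `ad R` equals that of
`ad (−t)`, and `ad R` is semisimple if and only if `η₀ = 0`. -/
theorem charpoly_ad_and_semisimple_iff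
    (L : Type*) [LieRing L] [LieAlgebra ℂ L] [Module.Finite ℂ L]
    (hcenter : LieAlgebra.center ℂ L = ⊥)
    (t : L)
    (hdec : DirectSum.IsInternal
      (fun i : Set.Icc (-2 : ℤ) 2 => adEigenspace L t ((i : ℤ) : ℂ)))
    (η₀ η₁ η₂ : L)
    (hη₀ : η₀ ∈ adEigenspace L t 0) (hη₀nil : IsNilpotent (LieAlgebra.ad ℂ L η₀))
    (hη₁ : η₁ ∈ adEigenspace L t 1) (hη₂ : η₂ ∈ adEigenspace L t 2) :
    (LieAlgebra.ad ℂ L (-t + η₀ + η₁ + η₂)).charpoly =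
      (LieAlgebra.ad ℂ L (-t)).charpoly ∧
    ((LieAlgebra.ad ℂ L (-t + η₀ + η₁ + η₂)).IsSemisimple ↔ η₀ = 0) := by
  refine ⟨SemisimpleAux.charpoly_eq hdec η₀ η₁ η₂ hη₀ hη₀nil hη₁ hη₂, ?_, ?_⟩
  · exact fun hss =>
      SemisimpleAux.eta0_eq_zero_of_ss hdec hcenter η₀ η₁ η₂ hη₀ hη₀nil hη₁ hη₂ hss
  · rintro rfl
    exact SemisimpleAux.ss_of_eta0_zero hdec η₁ η₂ hη₁ hη₂
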